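/- Let n ≥ 1 and let z⁰_1 ≤ ⋯ ≤ z⁰_n and z¹_1 ≤ ⋯ ≤ z¹_n be two increasing n-tuples of distinct reals. Define z^h_i = (z⁰_i + z¹_i)/2 and Int[X] = Σ_{1 ≤ i < j ≤ n} -log|z_i - z_j|. Then Int[X^h] ≤ (Int[X⁰] + Int[X¹])/2 - (1/8) Σ_{i=1}^{n-1} (G_i(X⁰) - G_i(X¹))² / (G_i(X⁰)² + G_i(X¹)²), where G_i(X) = z_{i+1} - z_i denotes the i-th gap. -/

import Mathlib

lemma key_log_ineq (a b : ℝ) (ha : 0 < a) (hb : 0 < b) :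
    -Real.log ((a + b) / 2) ≤
      (-Real.log a + -Real.log b) / 2 - (1 / 8) * ((a - b) ^ 2 / (a ^ 2 + b ^ 2)) := by
  have hab : 0 < a + b := by linarith
  set x : ℝ := (a - b) ^ 2 / (4 * (a * b)) with hx
  have hx0 : 0 ≤ x := by positivity
  have h1x : 1 + x = ((a + b) / 2) ^ 2 / (a * b) := by
    rw [hx]; field_simp; ring
  have h1xpos : (0 : ℝ) < 1 + x := by linarith
  have hlog : x / (1 + x) ≤ Real.log (1 + x) := by
    have h := Real.log_le_sub_one_of_pos (show (0 : ℝ) < 1 / (1 + x) by positivity)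
    have heq : Real.log (1 / (1 + x)) = -Real.log (1 + x) := by
      rw [Real.log_div one_ne_zero (ne_of_gt h1xpos), Real.log_one]; ring
    rw [heq] at h
    have : 1 - 1 / (1 + x) = x / (1 + x) := by field_simp; ring
    linarith [this ▸ (by linarith : 1 - 1 / (1 + x) ≤ Real.log (1 + x))]
  have hlogeq : Real.log (1 + x) = 2 * Real.log ((a + b) / 2) - Real.log a - Real.log b := by
    rw [h1x, Real.log_div (by positivity) (by positivity), Real.log_pow,
      Real.log_mul (ne_of_gt ha) (ne_of_gt hb)]
    push_cast; ring
  have hxeq : x / (1 + x) = (a - b) ^ 2 / (a + b) ^ 2 := by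
    rw [h1x, hx]; field_simp; ring
  have hfinal : (1 / 4) * ((a - b) ^ 2 / (a ^ 2 + b ^ 2)) ≤ (a - b) ^ 2 / (a + b) ^ 2 := by
    rw [show (1 / 4 : ℝ) * ((a - b) ^ 2 / (a ^ 2 + b ^ 2)) = ((a - b) ^ 2 / 4) / (a ^ 2 + b ^ 2)
      from by ring, div_le_div_iff₀ (by positivity) (by positivity)]
    nlinarith [sq_nonneg (a - b), sq_nonneg (a + b)]
  have := hxeq ▸ hlog
  linarith

lemma key_log_ineq' (a b : ℝ) (ha : 0 < a) (hb : 0 < b) :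
    -Real.log ((a + b) / 2) ≤ (-Real.log a + -Real.log b) / 2 := by
  have h := key_log_ineq a b ha hb
  have : 0 ≤ (1 / 8) * ((a - b) ^ 2 / (a ^ 2 + b ^ 2)) := by positivity
  linarith

theorem displacement_convexity_log_energy
    (n : ℕ) (hn : 1 ≤ n) (z0 z1 : ℕ → ℝ)
    (h0 : ∀ i j, i < j → j < n → z0 i < z0 j)
    (h1 : ∀ i j, i < j → j < n → z1 i < z1 j) :
    (∑ i ∈ Finset.range n, ∑ j ∈ Finset.range n,
        if i < j then -Real.log |(z0 i + z1 i) / 2 - (z0 j + z1 j) / 2| else 0) ≤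
      ((∑ i ∈ Finset.range n, ∑ j ∈ Finset.range n,
          if i < j then -Real.log |z0 i - z0 j| else 0) +
        (∑ i ∈ Finset.range n, ∑ j ∈ Finset.range n,
          if i < j then -Real.log |z1 i - z1 j| else 0)) / 2 -
      (1 / 8) * ∑ i ∈ Finset.range (n - 1),
        ((z0 (i + 1) - z0 i) - (z1 (i + 1) - z1 i)) ^ 2 /
          ((z0 (i + 1) - z0 i) ^ 2 + (z1 (i + 1) - z1 i) ^ 2) := by
  set e : ℕ → ℝ := fun i =>
    ((z0 (i + 1) - z0 i) - (z1 (i + 1) - z1 i)) ^ 2 /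
      ((z0 (i + 1) - z0 i) ^ 2 + (z1 (i + 1) - z1 i) ^ 2) with he
  -- Step 1: termwise inequality
  have step1 :
      (∑ i ∈ Finset.range n, ∑ j ∈ Finset.range n,
          if i < j then -Real.log |(z0 i + z1 i) / 2 - (z0 j + z1 j) / 2| else 0) ≤
      ∑ i ∈ Finset.range n, ∑ j ∈ Finset.range n,
          if i < j then
            (-Real.log |z0 i - z0 j| + -Real.log |z1 i - z1 j|) / 2 -
              (if j = i + 1 then (1 / 8) * e i else 0)
          else 0 := by
    apply Finset.sum_le_sum
    intro i _
    apply Finset.sum_le_sum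
    intro j hj
    rw [Finset.mem_range] at hj
    split_ifs with hij hji
    · -- consecutive pair
      subst hji
      have ha : 0 < z0 (i + 1) - z0 i := by linarith [h0 i (i + 1) (by omega) hj]
      have hb : 0 < z1 (i + 1) - z1 i := by linarith [h1 i (i + 1) (by omega) hj]
      have habs0 : |z0 i - z0 (i + 1)| = z0 (i + 1) - z0 i := by
        rw [abs_of_neg (by linarith)]; ring
      have habs1 : |z1 i - z1 (i + 1)| = z1 (i + 1) - z1 i := by
        rw [abs_of_neg (by linarith)]; ring
      have habsm : |(z0 i + z1 i) / 2 - (z0 (i + 1) + z1 (i + 1)) / 2|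
          = ((z0 (i + 1) - z0 i) + (z1 (i + 1) - z1 i)) / 2 := by
        rw [abs_of_neg (by linarith)]; ring
      rw [habs0, habs1, habsm, he]
      exact key_log_ineq _ _ ha hb
    · -- non-consecutive pair
      have ha : 0 < z0 j - z0 i := by linarith [h0 i j hij hj]
      have hb : 0 < z1 j - z1 i := by linarith [h1 i j hij hj]
      have habs0 : |z0 i - z0 j| = z0 j - z0 i := by
        rw [abs_of_neg (by linarith)]; ring
      have habs1 : |z1 i - z1 j| = z1 j - z1 i := by
        rw [abs_of_neg (by linarith)]; ring
      have habsm : |(z0 i + z1 i) / 2 - (z0 j + z1 j) / 2|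
          = ((z0 j - z0 i) + (z1 j - z1 i)) / 2 := by
        rw [abs_of_neg (by linarith)]; ring
      rw [habs0, habs1, habsm, sub_zero]
      exact key_log_ineq' _ _ ha hb
    · exact le_refl 0
  refine step1.trans (le_of_eq ?_)
  -- Step 2: rearrange the sum
  have hsplit : ∀ i j : ℕ,
      (if i < j then
        (-Real.log |z0 i - z0 j| + -Real.log |z1 i - z1 j|) / 2 -
          (if j = i + 1 then (1 / 8) * e i else 0)
      else 0) =
      ((if i < j then -Real.log |z0 i - z0 j| else 0) / 2 +
        (if i < j then -Real.log |z1 i - z1 j| else 0) / 2) -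
        (if i < j then (if j = i + 1 then (1 / 8) * e i else 0) else 0) := by
    intro i j; split_ifs <;> ring
  have hC : (∑ i ∈ Finset.range n, ∑ j ∈ Finset.range n,
      if i < j then (if j = i + 1 then (1 / 8) * e i else 0) else 0)
      = (1 / 8) * ∑ i ∈ Finset.range (n - 1), e i := by
    have hinner : ∀ i ∈ Finset.range n,
        (∑ j ∈ Finset.range n,
          if i < j then (if j = i + 1 then (1 / 8) * e i else 0) else 0) =
        (if i + 1 ∈ Finset.range n then (1 / 8) * e i else 0) := by
      intro i _
      rw [show (fun j => if i < j then (if j = i + 1 then (1 / 8) * e i else 0) else 0)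
          = fun j => if j = i + 1 then (1 / 8) * e i else 0 from ?_]
      · exact Finset.sum_ite_eq' (Finset.range n) (i + 1) (fun _ => (1 / 8) * e i)
      · funext j; split_ifs with h1' h2' h3' <;> first | rfl | omega
    rw [Finset.sum_congr rfl hinner,
      ← Finset.sum_subset (Finset.range_subset_range.2 (Nat.sub_le n 1))
        (fun i _ hi => by
          rw [Finset.mem_range] at hi
          have : ¬ (i + 1 < n) := by omega
          simp [Finset.mem_range, this]),
      Finset.mul_sum]
    apply Finset.sum_congr rfl
    intro i hi
    rw [Finset.mem_range] at hi
    rw [if_pos (Finset.mem_range.2 (by omega))]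
  simp only [hsplit]
  simp only [Finset.sum_sub_distrib, Finset.sum_add_distrib]
  rw [hC]
  simp only [← Finset.sum_div]
  ring
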